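/- Fix integers n ≥ 2 and k ≥ 3, set γ_k := 1/2 − 1/k, and let 𝔅 be a Bryant soliton profile. For any A₄ > 0 there exist a bounded function β : (0,∞) → ℝ, a constant B₄ > 0, and a time τ₄ < ∞, all depending only on n, k, A₄ and 𝔅, such that the functions z_±(r,τ) := 𝔅(A₄ r) ± e^{−2γ_k τ} β(r) satisfy T_r[z₊] ≥ 0 (supersolution) and T_r[z₋] ≤ 0 (subsolution) at every point of the region 0 < r ≤ B₄ e^{γ_k τ}, τ ≥ τ₄. -/

import Mathlib

open Topology Filter Asymptotics Set

/-- `γ_k = 1/2 - 1/k`. -/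
noncomputable def gam (k : ℕ) : ℝ := 1/2 - 1/(k:ℝ)

/-- The elliptic operator
`E_r[z] = z z'' - (1/2)(z')² + (n-1-z)z'/r + 2(n-1)(1-z)z/r²`. -/
noncomputable def Eop (n : ℕ) (z : ℝ → ℝ) (r : ℝ) : ℝ :=
  z r * deriv (deriv z) r - (1/2) * (deriv z r)^2
    + ((n:ℝ) - 1 - z r) * deriv z r / r
    + 2 * ((n:ℝ) - 1) * (1 - z r) * z r / r^2

/-- A Bryant soliton profile: a smooth decreasing function `𝔅 : [0,∞) → (0,1]` with
`𝔅(0)=1`, `𝔅'(0)=0`, `𝔅'<0` on `(0,∞)`, solving `E_r[𝔅]=0`, with the expansions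
`𝔅(ρ) = 1 - 𝔟ρ² + O(ρ⁴)` at `0` and `𝔅(ρ) = ρ⁻² + 𝔟₂ρ⁻⁴ + O(ρ⁻⁶)` at `∞`
(differentiable term by term), and with `-ρ𝔅'(ρ) ≥ c̃ min(ρ², ρ⁻²)`. -/
structure BryantProfile (n : ℕ) where
  toFun : ℝ → ℝ
  b : ℝ
  b2 : ℝ
  ctilde : ℝ
  smooth : ContDiffOn ℝ (⊤ : ℕ∞) toFun (Set.Ici 0)
  mem_Ioc : ∀ r : ℝ, 0 ≤ r → toFun r ∈ Set.Ioc (0:ℝ) 1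
  val_zero : toFun 0 = 1
  deriv_zero : deriv toFun 0 = 0
  deriv_neg : ∀ r : ℝ, 0 < r → deriv toFun r < 0
  soliton : ∀ r : ℝ, 0 < r → Eop n toFun r = 0
  b_pos : 0 < b
  expand_zero : (fun ρ => toFun ρ - (1 - b * ρ^2)) =O[𝓝[>] (0:ℝ)] fun ρ => ρ^4
  expand_zero_deriv :
    (fun ρ => deriv toFun ρ + 2 * b * ρ) =O[𝓝[>] (0:ℝ)] fun ρ => ρ^3
  expand_top :
    (fun ρ => toFun ρ - (ρ ^ (-2:ℝ) + b2 * ρ ^ (-4:ℝ))) =O[atTop] fun ρ => ρ ^ (-6:ℝ)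
  expand_top_deriv :
    (fun ρ => deriv toFun ρ - (-2 * ρ ^ (-3:ℝ) - 4 * b2 * ρ ^ (-5:ℝ)))
      =O[atTop] fun ρ => ρ ^ (-7:ℝ)
  ctilde_pos : 0 < ctilde
  deriv_lower : ∀ r : ℝ, 0 < r → ctilde * min (r^2) (r ^ (-2:ℝ)) ≤ -(r * deriv toFun r)

/-- The tip-region operator
`T_r[z] = e^{-2γ_k τ}(z_τ + (r/k) z_r) - E_r[z]/(2(n-1))` applied to `z = z(r,τ)`. -/
noncomputable def Trop (n k : ℕ) (z : ℝ → ℝ → ℝ) (r τ : ℝ) : ℝ :=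
  Real.exp (-2 * gam k * τ) * (deriv (z r) τ + (r/(k:ℝ)) * deriv (fun x => z x τ) r)
    - Eop n (fun x => z x τ) r / (2 * ((n:ℝ) - 1))

section Aux
variable {n : ℕ}

private lemma bp_contDiffAt (𝔅 : BryantProfile n) {ρ : ℝ} (hρ : 0 < ρ) :
    ContDiffAt ℝ (⊤ : ℕ∞) 𝔅.toFun ρ :=
  𝔅.smooth.contDiffAt (Ici_mem_nhds hρ)

private lemma bp_hasDerivAt (𝔅 : BryantProfile n) {ρ : ℝ} (hρ : 0 < ρ) :
    HasDerivAt 𝔅.toFun (deriv 𝔅.toFun ρ) ρ :=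
  ((bp_contDiffAt 𝔅 hρ).differentiableAt (by simp)).hasDerivAt

private lemma bp_deriv_contDiffOn (𝔅 : BryantProfile n) :
    ContDiffOn ℝ (⊤ : ℕ∞) (deriv 𝔅.toFun) (Ioi 0) :=
  (𝔅.smooth.mono Ioi_subset_Ici_self).deriv_of_isOpen isOpen_Ioi (by exact_mod_cast le_top)

private lemma bp_hasDerivAt2 (𝔅 : BryantProfile n) {ρ : ℝ} (hρ : 0 < ρ) :
    HasDerivAt (deriv 𝔅.toFun) (deriv (deriv 𝔅.toFun) ρ) ρ :=
  (((bp_deriv_contDiffOn 𝔅).differentiableOn (by simp)).differentiableAt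
    (isOpen_Ioi.mem_nhds hρ)).hasDerivAt

end Aux

section Aux2
variable {n : ℕ}

private lemma bp_comp1 (𝔅 : BryantProfile n) {A r : ℝ} (hA : 0 < A) (hr : 0 < r) :
    HasDerivAt (fun x => 𝔅.toFun (A * x)) (deriv 𝔅.toFun (A * r) * A) r := by
  have h := (bp_hasDerivAt 𝔅 (mul_pos hA hr)).comp r
    (by simpa using (hasDerivAt_id r).const_mul A :
      HasDerivAt (fun x : ℝ => A * x) A r)
  simpa [Function.comp_def] using h

private lemma bp_comp2 (𝔅 : BryantProfile n) {A r : ℝ} (hA : 0 < A) (hr : 0 < r) :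
    HasDerivAt (fun x => deriv 𝔅.toFun (A * x)) (deriv (deriv 𝔅.toFun) (A * r) * A) r := by
  have h := (bp_hasDerivAt2 𝔅 (mul_pos hA hr)).comp r
    (by simpa using (hasDerivAt_id r).const_mul A :
      HasDerivAt (fun x : ℝ => A * x) A r)
  simpa [Function.comp_def] using h

private lemma g_hasDerivAt (𝔅 : BryantProfile n) {A r : ℝ} (hA : 0 < A) (hr : 0 < r) (m : ℝ) :
    HasDerivAt (fun x => (1 + m) * 𝔅.toFun (A * x) - m)
      ((1 + m) * (deriv 𝔅.toFun (A * r) * A)) r :=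
  ((bp_comp1 𝔅 hA hr).const_mul (1 + m)).sub_const m

private lemma g_deriv (𝔅 : BryantProfile n) {A r : ℝ} (hA : 0 < A) (hr : 0 < r) (m : ℝ) :
    deriv (fun x => (1 + m) * 𝔅.toFun (A * x) - m) r
      = (1 + m) * (deriv 𝔅.toFun (A * r) * A) :=
  (g_hasDerivAt 𝔅 hA hr m).deriv

private lemma g_deriv2 (𝔅 : BryantProfile n) {A r : ℝ} (hA : 0 < A) (hr : 0 < r) (m : ℝ) :
    deriv (deriv (fun x => (1 + m) * 𝔅.toFun (A * x) - m)) r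
      = (1 + m) * (deriv (deriv 𝔅.toFun) (A * r) * A * A) := by
  have hev : deriv (fun x => (1 + m) * 𝔅.toFun (A * x) - m) =ᶠ[𝓝 r]
      (fun x => (1 + m) * (deriv 𝔅.toFun (A * x) * A)) := by
    filter_upwards [isOpen_Ioi.mem_nhds hr] with x hx
    exact (g_hasDerivAt 𝔅 hA hx m).deriv
  rw [hev.deriv_eq]
  have := (((bp_comp2 𝔅 hA hr).mul_const A).const_mul (1 + m)).deriv
  rw [this]

private lemma soliton_r (𝔅 : BryantProfile n) {A r : ℝ} (hA : 0 < A) (hr : 0 < r) :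
    𝔅.toFun (A*r) * (A^2 * deriv (deriv 𝔅.toFun) (A*r)) - (1/2) * (A * deriv 𝔅.toFun (A*r))^2
      + ((n:ℝ) - 1 - 𝔅.toFun (A*r)) * (A * deriv 𝔅.toFun (A*r)) / r
      + 2 * ((n:ℝ) - 1) * (1 - 𝔅.toFun (A*r)) * 𝔅.toFun (A*r) / r^2 = 0 := by
  have hE := 𝔅.soliton (A*r) (mul_pos hA hr)
  unfold Eop at hE
  have hA' : A ≠ 0 := hA.ne'
  have hr' : r ≠ 0 := hr.ne'
  have hfac : 𝔅.toFun (A*r) * (A^2 * deriv (deriv 𝔅.toFun) (A*r))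
        - (1/2) * (A * deriv 𝔅.toFun (A*r))^2
      + ((n:ℝ) - 1 - 𝔅.toFun (A*r)) * (A * deriv 𝔅.toFun (A*r)) / r
      + 2 * ((n:ℝ) - 1) * (1 - 𝔅.toFun (A*r)) * 𝔅.toFun (A*r) / r^2
      = A^2 * (𝔅.toFun (A*r) * deriv (deriv 𝔅.toFun) (A*r)
          - (1/2) * (deriv 𝔅.toFun (A*r))^2
          + ((n:ℝ) - 1 - 𝔅.toFun (A*r)) * deriv 𝔅.toFun (A*r) / (A*r)
          + 2 * ((n:ℝ) - 1) * (1 - 𝔅.toFun (A*r)) * 𝔅.toFun (A*r) / (A*r)^2) := by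
    field_simp
  rw [hfac, hE, mul_zero]

end Aux2



section Aux3
variable {n : ℕ}

private noncomputable def QQf (n : ℕ) (𝔅 : BryantProfile n) (A r : ℝ) : ℝ :=
  (𝔅.toFun (A*r) - 1) * (A^2 * deriv (deriv 𝔅.toFun) (A*r))
    - (A * deriv 𝔅.toFun (A*r))^2 / 2
    - (𝔅.toFun (A*r) - 1) * (A * deriv 𝔅.toFun (A*r)) / r
    - 2*((n:ℝ)-1) * (𝔅.toFun (A*r) - 1)^2 / r^2

private lemma eop_eval (𝔅 : BryantProfile n) {A r : ℝ} (hA : 0 < A) (hr : 0 < r) (m : ℝ) :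
    Eop n (fun x => (1 + m) * 𝔅.toFun (A * x) - m) r = (1 + m) * m * QQf n 𝔅 A r := by
  have hE := soliton_r 𝔅 hA hr
  simp only [Eop, QQf]
  rw [g_deriv 𝔅 hA hr m, g_deriv2 𝔅 hA hr m]
  linear_combination (1 + m) * hE

private lemma qq_mul (𝔅 : BryantProfile n) {A r : ℝ} (hA : 0 < A) (hr : 0 < r) :
    𝔅.toFun (A*r) * r * QQf n 𝔅 A r
      = -(r * (A * deriv 𝔅.toFun (A*r))^2) / 2
        + ((n:ℝ)-1) * (1 - 𝔅.toFun (A*r)) * (A * deriv 𝔅.toFun (A*r)) := by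
  have hE := soliton_r 𝔅 hA hr
  simp only [QQf]
  have hr' : r ≠ 0 := hr.ne'
  linear_combination (norm := skip) ((𝔅.toFun (A*r) - 1) * r) * hE
  field_simp
  ring

private lemma trop_eval (k : ℕ) (𝔅 : BryantProfile n) {A r : ℝ} (hA : 0 < A) (hr : 0 < r)
    (q τ : ℝ) :
    Trop n k (fun r' τ' => 𝔅.toFun (A * r')
        + Real.exp (-2 * gam k * τ') * (q * (𝔅.toFun (A * r') - 1))) r τ
      = Real.exp (-2 * gam k * τ) *
          (Real.exp (-2 * gam k * τ) * (-2 * gam k) * (q * (𝔅.toFun (A * r) - 1))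
            + (r / (k:ℝ)) * ((1 + q * Real.exp (-2 * gam k * τ)) * (deriv 𝔅.toFun (A * r) * A)))
        - ((1 + q * Real.exp (-2 * gam k * τ)) * (q * Real.exp (-2 * gam k * τ))
            * QQf n 𝔅 A r) / (2 * ((n:ℝ) - 1)) := by
  have hτ : deriv (fun τ' => 𝔅.toFun (A * r)
      + Real.exp (-2 * gam k * τ') * (q * (𝔅.toFun (A * r) - 1))) τ
      = Real.exp (-2 * gam k * τ) * (-2 * gam k) * (q * (𝔅.toFun (A * r) - 1)) := by
    have hexp : HasDerivAt (fun τ' : ℝ => Real.exp (-2 * gam k * τ'))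
        (Real.exp (-2 * gam k * τ) * (-2 * gam k)) τ := by
      have hin : HasDerivAt (fun τ' : ℝ => -2 * gam k * τ') (-2 * gam k) τ := by
        simpa using (hasDerivAt_id τ).const_mul (-2 * gam k)
      simpa using hin.exp
    exact ((hexp.mul_const (q * (𝔅.toFun (A * r) - 1))).const_add (𝔅.toFun (A * r))).deriv
  have hsec : (fun x => 𝔅.toFun (A * x)
        + Real.exp (-2 * gam k * τ) * (q * (𝔅.toFun (A * x) - 1)))
      = (fun x => (1 + q * Real.exp (-2 * gam k * τ)) * 𝔅.toFun (A * x)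
          - q * Real.exp (-2 * gam k * τ)) := by
    funext x; ring
  simp only [Trop]
  rw [hτ, hsec, eop_eval 𝔅 hA hr (q * Real.exp (-2 * gam k * τ)),
    g_deriv 𝔅 hA hr (q * Real.exp (-2 * gam k * τ))]

end Aux3

section Aux4
variable {n : ℕ}

set_option maxHeartbeats 1000000 in
private lemma ratio_bound (𝔅 : BryantProfile n) :
    ∃ K : ℝ, 0 < K ∧ ∀ ρ : ℝ, 0 < ρ → 𝔅.toFun ρ * ρ^2 ≤ K * (1 - 𝔅.toFun ρ) := by
  have hanti : StrictAntiOn 𝔅.toFun (Ici 0) :=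
    strictAntiOn_of_deriv_neg (convex_Ici 0) 𝔅.smooth.continuousOn
      (by rw [interior_Ici]; exact fun x hx => 𝔅.deriv_neg x hx)
  have hbpos := 𝔅.b_pos
  obtain ⟨C0, hC0pos, hC0⟩ := 𝔅.expand_zero.exists_pos
  rw [Asymptotics.isBigOWith_iff, (nhdsGT_basis (0:ℝ)).eventually_iff] at hC0
  obtain ⟨δ, hδpos, hδ⟩ := hC0
  obtain ⟨ρ₀, hρ₀pos, hρ₀δ, hρ₀sq⟩ :
      ∃ ρ₀ : ℝ, 0 < ρ₀ ∧ ρ₀ < δ ∧ C0 * ρ₀^2 ≤ 𝔅.b/2 := by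
    refine ⟨min (δ/2) (Real.sqrt (𝔅.b/(2*C0))), ?_, ?_, ?_⟩
    · exact lt_min (by linarith) (Real.sqrt_pos.mpr (by positivity))
    · exact lt_of_le_of_lt (min_le_left _ _) (by linarith)
    · have h1 : min (δ/2) (Real.sqrt (𝔅.b/(2*C0))) ≤ Real.sqrt (𝔅.b/(2*C0)) :=
        min_le_right _ _
      have h0 : 0 ≤ min (δ/2) (Real.sqrt (𝔅.b/(2*C0))) :=
        le_min (by linarith) (Real.sqrt_nonneg _)
      have h2 : (min (δ/2) (Real.sqrt (𝔅.b/(2*C0))))^2 ≤ 𝔅.b/(2*C0) := by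
        have h2' := pow_le_pow_left₀ h0 h1 2
        rwa [Real.sq_sqrt (by positivity : (0:ℝ) ≤ 𝔅.b/(2*C0))] at h2'
      calc C0 * (min (δ/2) (Real.sqrt (𝔅.b/(2*C0))))^2 ≤ C0 * (𝔅.b/(2*C0)) := by nlinarith
      _ = 𝔅.b/2 := by field_simp
  have hsmall : ∀ ρ : ℝ, 0 < ρ → ρ ≤ ρ₀ →
      𝔅.toFun ρ * ρ^2 ≤ (2/𝔅.b) * (1 - 𝔅.toFun ρ) := by
    intro ρ h1 h2
    have hmem : ρ ∈ Ioo 0 δ := ⟨h1, lt_of_le_of_lt h2 hρ₀δ⟩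
    have hb := hδ hmem
    rw [Real.norm_eq_abs, Real.norm_eq_abs, abs_of_nonneg (by positivity : (0:ℝ) ≤ ρ^4)] at hb
    have habs := abs_le.mp hb
    have hsq : ρ^2 ≤ ρ₀^2 := by nlinarith
    have hC0ρ : C0 * ρ^2 ≤ 𝔅.b/2 := by nlinarith
    have hge : (𝔅.b/2) * ρ^2 ≤ 1 - 𝔅.toFun ρ := by nlinarith [habs.2, sq_nonneg ρ]
    have hBle := (𝔅.mem_Ioc ρ h1.le).2
    rw [div_mul_eq_mul_div, le_div_iff₀ hbpos]
    have hfact : 0 ≤ 𝔅.b * ρ^2 * (1 - 𝔅.toFun ρ) := by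
      apply mul_nonneg (mul_nonneg hbpos.le (sq_nonneg ρ))
      linarith
    nlinarith [sq_nonneg ρ]
  obtain ⟨C1, hC1pos, hC1⟩ := 𝔅.expand_top.exists_pos
  rw [Asymptotics.isBigOWith_iff, eventually_atTop] at hC1
  obtain ⟨ρ₁', hρ₁'⟩ := hC1
  obtain ⟨ρ₁, hρ₁1, hρ₁ρ₀, hρ₁b⟩ :
      ∃ ρ₁ : ℝ, (1:ℝ) ≤ ρ₁ ∧ ρ₀ ≤ ρ₁ ∧ ∀ ρ : ℝ, ρ₁ ≤ ρ →
        ‖𝔅.toFun ρ - (ρ ^ (-2:ℝ) + 𝔅.b2 * ρ ^ (-4:ℝ))‖ ≤ C1 * ‖ρ ^ (-6:ℝ)‖ := by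
    exact ⟨max ρ₁' (max ρ₀ 1), le_max_of_le_right (le_max_right _ _),
      le_max_of_le_right (le_max_left _ _),
      fun ρ hρ => hρ₁' ρ (le_trans (le_max_left _ _) hρ)⟩
  have hρ₁pos : (0:ℝ) < ρ₁ := lt_of_lt_of_le one_pos hρ₁1
  have htop : ∀ ρ : ℝ, ρ₁ ≤ ρ → 𝔅.toFun ρ * ρ^2 ≤ 1 + |𝔅.b2| + C1 := by
    intro ρ hρ
    have h1 : (1:ℝ) ≤ ρ := hρ₁1.trans hρ
    have h0 : (0:ℝ) < ρ := lt_of_lt_of_le one_pos h1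
    have hb := hρ₁b ρ hρ
    have e2 : ρ ^ (-2:ℝ) = (ρ^2)⁻¹ := by
      rw [show (-2:ℝ) = -((2:ℕ):ℝ) by norm_num, Real.rpow_neg h0.le, Real.rpow_natCast]
    have e4 : ρ ^ (-4:ℝ) = (ρ^4)⁻¹ := by
      rw [show (-4:ℝ) = -((4:ℕ):ℝ) by norm_num, Real.rpow_neg h0.le, Real.rpow_natCast]
    have e6 : ρ ^ (-6:ℝ) = (ρ^6)⁻¹ := by
      rw [show (-6:ℝ) = -((6:ℕ):ℝ) by norm_num, Real.rpow_neg h0.le, Real.rpow_natCast]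
    rw [Real.norm_eq_abs, Real.norm_eq_abs, e2, e4, e6,
      abs_of_nonneg (by positivity : (0:ℝ) ≤ (ρ^6)⁻¹)] at hb
    have habs := (abs_le.mp hb).2
    have hi2 : (ρ^2)⁻¹ ≤ 1 := by
      rw [inv_le_one_iff₀]
      right; nlinarith
    have hi2pos : (0:ℝ) < (ρ^2)⁻¹ := by positivity
    have key : 𝔅.toFun ρ * ρ^2 ≤ ((ρ^2)⁻¹ + 𝔅.b2 * (ρ^4)⁻¹ + C1 * (ρ^6)⁻¹) * ρ^2 := by
      have h3 : 𝔅.toFun ρ ≤ (ρ^2)⁻¹ + 𝔅.b2 * (ρ^4)⁻¹ + C1 * (ρ^6)⁻¹ := by linarith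
      nlinarith [sq_nonneg ρ]
    have expand : ((ρ^2)⁻¹ + 𝔅.b2 * (ρ^4)⁻¹ + C1 * (ρ^6)⁻¹) * ρ^2
        = 1 + 𝔅.b2 * (ρ^2)⁻¹ + C1 * ((ρ^2)⁻¹ * (ρ^2)⁻¹) := by
      field_simp
    rw [expand] at key
    have hb2' : 𝔅.b2 * (ρ^2)⁻¹ ≤ |𝔅.b2| := by
      calc 𝔅.b2 * (ρ^2)⁻¹ ≤ |𝔅.b2| * (ρ^2)⁻¹ :=
            mul_le_mul_of_nonneg_right (le_abs_self _) hi2pos.le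
      _ ≤ |𝔅.b2| * 1 := mul_le_mul_of_nonneg_left hi2 (abs_nonneg _)
      _ = |𝔅.b2| := mul_one _
    have hii : (ρ^2)⁻¹ * (ρ^2)⁻¹ ≤ 1 := mul_le_one₀ hi2 hi2pos.le hi2
    have hc1' : C1 * ((ρ^2)⁻¹ * (ρ^2)⁻¹) ≤ C1 := by
      calc C1 * ((ρ^2)⁻¹ * (ρ^2)⁻¹) ≤ C1 * 1 := mul_le_mul_of_nonneg_left hii hC1pos.le
      _ = C1 := mul_one _
    linarith
  have hθ : 0 < 1 - 𝔅.toFun ρ₀ := by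
    have h := hanti self_mem_Ici (show ρ₀ ∈ Ici 0 from hρ₀pos.le) hρ₀pos
    rw [𝔅.val_zero] at h
    linarith
  have hmono : ∀ ρ : ℝ, ρ₀ ≤ ρ → 1 - 𝔅.toFun ρ₀ ≤ 1 - 𝔅.toFun ρ := by
    intro ρ hρ
    rcases eq_or_lt_of_le hρ with h | h
    · rw [← h]
    · have := hanti (show ρ₀ ∈ Ici 0 from hρ₀pos.le)
        (show ρ ∈ Ici 0 from (hρ₀pos.trans h).le) h
      linarith
  have hK1 : (0:ℝ) < 2/𝔅.b := by positivity
  have hK2 : (0:ℝ) ≤ (1 + |𝔅.b2| + C1)/(1 - 𝔅.toFun ρ₀) := by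
    apply div_nonneg _ hθ.le
    have := abs_nonneg 𝔅.b2
    linarith
  have hK3 : (0:ℝ) ≤ ρ₁^2/(1 - 𝔅.toFun ρ₀) := div_nonneg (sq_nonneg _) hθ.le
  refine ⟨2/𝔅.b + (1 + |𝔅.b2| + C1)/(1 - 𝔅.toFun ρ₀) + ρ₁^2/(1 - 𝔅.toFun ρ₀),
    by linarith, ?_⟩
  intro ρ hρ
  have hB := 𝔅.mem_Ioc ρ hρ.le
  have hBnn : 0 ≤ 1 - 𝔅.toFun ρ := by linarith [hB.2]
  have hterm1 : 0 ≤ (2/𝔅.b) * (1 - 𝔅.toFun ρ) := mul_nonneg hK1.le hBnn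
  have hterm2 : 0 ≤ ((1 + |𝔅.b2| + C1)/(1 - 𝔅.toFun ρ₀)) * (1 - 𝔅.toFun ρ) :=
    mul_nonneg hK2 hBnn
  have hterm3 : 0 ≤ (ρ₁^2/(1 - 𝔅.toFun ρ₀)) * (1 - 𝔅.toFun ρ) := mul_nonneg hK3 hBnn
  rcases le_total ρ ρ₀ with h | h
  · have := hsmall ρ hρ h
    nlinarith
  · have hθρ : 1 - 𝔅.toFun ρ₀ ≤ 1 - 𝔅.toFun ρ := hmono ρ h
    rcases le_total ρ ρ₁ with h2 | h2
    · have hρsq : ρ^2 ≤ ρ₁^2 := by nlinarith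
      have hmid : 𝔅.toFun ρ * ρ^2 ≤ ρ₁^2 :=
        le_trans (mul_le_of_le_one_left (sq_nonneg ρ) hB.2) hρsq
      have hstep : 𝔅.toFun ρ * ρ^2 ≤ (ρ₁^2/(1 - 𝔅.toFun ρ₀)) * (1 - 𝔅.toFun ρ) := by
        calc 𝔅.toFun ρ * ρ^2 ≤ ρ₁^2 := hmid
        _ = (ρ₁^2/(1 - 𝔅.toFun ρ₀)) * (1 - 𝔅.toFun ρ₀) := by field_simp
        _ ≤ (ρ₁^2/(1 - 𝔅.toFun ρ₀)) * (1 - 𝔅.toFun ρ) :=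
            mul_le_mul_of_nonneg_left hθρ hK3
      nlinarith
    · have htopρ := htop ρ h2
      have hC1abs : (0:ℝ) ≤ 1 + |𝔅.b2| + C1 := by
        have := abs_nonneg 𝔅.b2
        linarith
      have hstep : 𝔅.toFun ρ * ρ^2
          ≤ ((1 + |𝔅.b2| + C1)/(1 - 𝔅.toFun ρ₀)) * (1 - 𝔅.toFun ρ) := by
        calc 𝔅.toFun ρ * ρ^2 ≤ 1 + |𝔅.b2| + C1 := htopρ
        _ = ((1 + |𝔅.b2| + C1)/(1 - 𝔅.toFun ρ₀)) * (1 - 𝔅.toFun ρ₀) := by field_simp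
        _ ≤ ((1 + |𝔅.b2| + C1)/(1 - 𝔅.toFun ρ₀)) * (1 - 𝔅.toFun ρ) :=
            mul_le_mul_of_nonneg_left hθρ hK2
      nlinarith
  
end Aux4


set_option maxHeartbeats 1000000 in
/-- sub- and supersolutions in the tip region. -/
theorem stmt5 (n k : ℕ) (hn : 2 ≤ n) (hk : 3 ≤ k)
    (𝔅 : BryantProfile n) (A₄ : ℝ) (hA₄ : 0 < A₄) :
    ∃ (β : ℝ → ℝ) (M B₄ τ₄ : ℝ), (∀ r : ℝ, 0 < r → |β r| ≤ M) ∧ 0 < B₄ ∧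
      ∀ r τ : ℝ, τ₄ ≤ τ → 0 < r → r ≤ B₄ * Real.exp (gam k * τ) →
        0 ≤ Trop n k (fun r' τ' => 𝔅.toFun (A₄ * r') + Real.exp (-2 * gam k * τ') * β r') r τ ∧
        Trop n k (fun r' τ' => 𝔅.toFun (A₄ * r') - Real.exp (-2 * gam k * τ') * β r') r τ ≤ 0 := by
  obtain ⟨K, hKpos, hKrat⟩ := ratio_bound 𝔅
  have hk3 : (3:ℝ) ≤ (k:ℝ) := by exact_mod_cast hk
  have hkpos : (0:ℝ) < (k:ℝ) := by linarith
  have hγ : 0 < gam k := by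
    have h13 : 1/(k:ℝ) ≤ 1/3 := by
      apply one_div_le_one_div_of_le (by norm_num) hk3
    unfold gam; linarith
  have hn2 : (2:ℝ) ≤ (n:ℝ) := by exact_mod_cast hn
  have hN : (0:ℝ) < 2 * ((n:ℝ) - 1) := by linarith
  obtain ⟨c, hcpos, hck2⟩ : ∃ c : ℝ, 0 < c ∧ 2*K ≤ c*(k:ℝ)*A₄^2 := by
    refine ⟨2*K/((k:ℝ)*A₄^2) + 1, by positivity, ?_⟩
    have hexp : (2*K/((k:ℝ)*A₄^2) + 1) * (k:ℝ) * A₄^2 = 2*K + (k:ℝ)*A₄^2 := by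
      field_simp
    have hpos2 : 0 < (k:ℝ)*A₄^2 := by positivity
    linarith
  refine ⟨fun r' => c * (𝔅.toFun (A₄ * r') - 1), c, 1, Real.log c / (2 * gam k),
    ?_, one_pos, ?_⟩
  · intro r hr
    have hB := 𝔅.mem_Ioc (A₄*r) (mul_pos hA₄ hr).le
    rw [abs_of_nonpos (by nlinarith [hB.2] : c * (𝔅.toFun (A₄*r) - 1) ≤ 0)]
    nlinarith [hB.1, hB.2]
  · intro r τ hτ hr _
    obtain ⟨E, hEdef, hEpos⟩ : ∃ E : ℝ, Real.exp (-2 * gam k * τ) = E ∧ 0 < E :=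
      ⟨_, rfl, Real.exp_pos _⟩
    have hcE : c * E ≤ 1 := by
      have h1 : -2 * gam k * τ ≤ -Real.log c := by
        have h2 : Real.log c / (2*gam k) * (2 * gam k) = Real.log c := by
          field_simp
        nlinarith [hτ, hγ]
      have h2 : E ≤ c⁻¹ := by
        rw [← hEdef, ← Real.exp_log hcpos, ← Real.exp_neg]
        exact Real.exp_le_exp.mpr h1
      calc c * E ≤ c * c⁻¹ := mul_le_mul_of_nonneg_left h2 hcpos.le
      _ = 1 := mul_inv_cancel₀ hcpos.ne'
    have hρ : 0 < A₄ * r := mul_pos hA₄ hr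
    have hB := 𝔅.mem_Ioc (A₄*r) hρ.le
    have hD1 : deriv 𝔅.toFun (A₄*r) < 0 := 𝔅.deriv_neg _ hρ
    have hQm := qq_mul 𝔅 hA₄ hr
    have hBnn : 0 ≤ 1 - 𝔅.toFun (A₄*r) := by linarith [hB.2]
    have hKey : 2 * 𝔅.toFun (A₄*r) * r^2 ≤ c * (k:ℝ) * (1 - 𝔅.toFun (A₄*r)) := by
      have h1 : 𝔅.toFun (A₄*r) * (A₄*r)^2 ≤ K * (1 - 𝔅.toFun (A₄*r)) := hKrat (A₄*r) hρ
      have hgoal' : 2 * 𝔅.toFun (A₄*r) * r^2 * A₄^2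
          ≤ c * (k:ℝ) * (1 - 𝔅.toFun (A₄*r)) * A₄^2 := by
        nlinarith [h1, hck2, hBnn]
      exact le_of_mul_le_mul_right hgoal' (by positivity)
    have hP : 0 < -(A₄ * deriv 𝔅.toFun (A₄*r)) := by nlinarith [hD1, hA₄]
    have hQlow : ((n:ℝ)-1) * (1 - 𝔅.toFun (A₄*r)) * (-(A₄ * deriv 𝔅.toFun (A₄*r)))
        ≤ 𝔅.toFun (A₄*r) * r * (-(QQf n 𝔅 A₄ r)) := by
      nlinarith [hQm, mul_nonneg hr.le (sq_nonneg (A₄ * deriv 𝔅.toFun (A₄*r)))]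
    have hQnp : QQf n 𝔅 A₄ r ≤ 0 := by
      have hAD : A₄ * deriv 𝔅.toFun (A₄*r) < 0 := mul_neg_of_pos_of_neg hA₄ hD1
      have hBrQQ : 𝔅.toFun (A₄*r) * r * QQf n 𝔅 A₄ r ≤ 0 := by
        nlinarith [hQm, mul_nonneg hr.le (sq_nonneg (A₄ * deriv 𝔅.toFun (A₄*r))),
          mul_nonneg (by linarith : (0:ℝ) ≤ (n:ℝ)-1) hBnn]
      by_contra hpos
      push_neg at hpos
      nlinarith [mul_pos (mul_pos hB.1 hr) hpos]
    constructor
    · -- supersolution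
      show 0 ≤ Trop n k (fun r' τ' => 𝔅.toFun (A₄ * r')
        + Real.exp (-2 * gam k * τ') * (c * (𝔅.toFun (A₄ * r') - 1))) r τ
      rw [trop_eval k 𝔅 hA₄ hr c τ, hEdef]
      have h1cE : (0:ℝ) < 1 + c*E := by positivity
      have hQdiv : ((n:ℝ)-1) * (1 - 𝔅.toFun (A₄*r)) * (-(A₄ * deriv 𝔅.toFun (A₄*r))) / (𝔅.toFun (A₄*r) * r)
          ≤ -(QQf n 𝔅 A₄ r) := by
        rw [div_le_iff₀ (mul_pos hB.1 hr)]
        nlinarith [hQlow]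
      have hnonneg1 : (0:ℝ) ≤ E*(1+c*E)*(-(A₄ * deriv 𝔅.toFun (A₄*r)))*((n:ℝ)-1) :=
        mul_nonneg (mul_nonneg (mul_nonneg hEpos.le h1cE.le) hP.le) (by linarith)
      have step : E*((r/(k:ℝ))*((1+c*E)*(-(A₄ * deriv 𝔅.toFun (A₄*r))))) * (2*((n:ℝ)-1))
          ≤ (1+c*E)*(c*E)*(-(QQf n 𝔅 A₄ r)) := by
        have hmid : E*((r/(k:ℝ))*((1+c*E)*(-(A₄ * deriv 𝔅.toFun (A₄*r))))) * (2*((n:ℝ)-1))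
            ≤ (1+c*E)*(c*E)*(((n:ℝ)-1) * (1 - 𝔅.toFun (A₄*r)) * (-(A₄ * deriv 𝔅.toFun (A₄*r))) / (𝔅.toFun (A₄*r) * r)) := by
          apply le_of_mul_le_mul_right _
            (show (0:ℝ) < (k:ℝ)*(𝔅.toFun (A₄*r)*r) from mul_pos hkpos (mul_pos hB.1 hr))
          have hx : E*((r/(k:ℝ))*((1+c*E)*(-(A₄ * deriv 𝔅.toFun (A₄*r))))) * (2*((n:ℝ)-1)) * ((k:ℝ)*(𝔅.toFun (A₄*r)*r))
              = E*(1+c*E)*(-(A₄ * deriv 𝔅.toFun (A₄*r)))*((n:ℝ)-1) * (2 * 𝔅.toFun (A₄*r) * r^2) := by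
            field_simp
          have hy : (1+c*E)*(c*E)*(((n:ℝ)-1) * (1 - 𝔅.toFun (A₄*r)) * (-(A₄ * deriv 𝔅.toFun (A₄*r))) / (𝔅.toFun (A₄*r) * r)) * ((k:ℝ)*(𝔅.toFun (A₄*r)*r))
              = E*(1+c*E)*(-(A₄ * deriv 𝔅.toFun (A₄*r)))*((n:ℝ)-1) * (c*(k:ℝ)*(1 - 𝔅.toFun (A₄*r))) := by
            field_simp [hr.ne', hB.1.ne', hkpos.ne']
          rw [hx, hy]
          exact mul_le_mul_of_nonneg_left hKey hnonneg1
        calc E*((r/(k:ℝ))*((1+c*E)*(-(A₄ * deriv 𝔅.toFun (A₄*r))))) * (2*((n:ℝ)-1))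
            ≤ (1+c*E)*(c*E)*(((n:ℝ)-1) * (1 - 𝔅.toFun (A₄*r)) * (-(A₄ * deriv 𝔅.toFun (A₄*r))) / (𝔅.toFun (A₄*r) * r)) := hmid
          _ ≤ (1+c*E)*(c*E)*(-(QQf n 𝔅 A₄ r)) := by
              apply mul_le_mul_of_nonneg_left hQdiv
              positivity
      have hterm0 : (0:ℝ) ≤ E*(E*(2*gam k)*(c*(1-𝔅.toFun (A₄*r)))) := by
        apply mul_nonneg hEpos.le
        apply mul_nonneg (mul_nonneg hEpos.le (by linarith))
        exact mul_nonneg hcpos.le hBnn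
      have hdiv : E*((r/(k:ℝ))*((1+c*E)*(-(A₄ * deriv 𝔅.toFun (A₄*r)))))
          ≤ (1+c*E)*(c*E)*(-(QQf n 𝔅 A₄ r))/(2*((n:ℝ)-1)) := by
        rw [le_div_iff₀ hN]
        linarith [step]
      have hsplit : E*(E*(-2*gam k)*(c*(𝔅.toFun (A₄*r)-1))
            + (r/(k:ℝ))*((1+c*E)*(deriv 𝔅.toFun (A₄*r)*A₄)))
          - ((1+c*E)*(c*E)*(QQf n 𝔅 A₄ r))/(2*((n:ℝ)-1))
          = E*(E*(2*gam k)*(c*(1-𝔅.toFun (A₄*r))))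
            + ((1+c*E)*(c*E)*(-(QQf n 𝔅 A₄ r))/(2*((n:ℝ)-1))
              - E*((r/(k:ℝ))*((1+c*E)*(-(A₄ * deriv 𝔅.toFun (A₄*r)))))) := by
        ring
      rw [hsplit]
      linarith [hterm0, hdiv]
    · -- subsolution
      show Trop n k (fun r' τ' => 𝔅.toFun (A₄ * r')
        - Real.exp (-2 * gam k * τ') * (c * (𝔅.toFun (A₄ * r') - 1))) r τ ≤ 0
      have hfun : (fun r' τ' => 𝔅.toFun (A₄ * r')
            - Real.exp (-2 * gam k * τ') * (c * (𝔅.toFun (A₄ * r') - 1)))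
          = (fun r' τ' => 𝔅.toFun (A₄ * r')
            + Real.exp (-2 * gam k * τ') * ((-c) * (𝔅.toFun (A₄ * r') - 1))) := by
        funext r' τ'; ring
      rw [hfun, trop_eval k 𝔅 hA₄ hr (-c) τ, hEdef]
      have h1mcE : (0:ℝ) ≤ 1 - c*E := by linarith [hcE]
      have hsplit2 : E*(E*(-2*gam k)*((-c)*(𝔅.toFun (A₄*r)-1))
            + (r/(k:ℝ))*((1+(-c)*E)*(deriv 𝔅.toFun (A₄*r)*A₄)))
          - ((1+(-c)*E)*((-c)*E)*(QQf n 𝔅 A₄ r))/(2*((n:ℝ)-1))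
          = -(2*gam k*c*(1-𝔅.toFun (A₄*r))*(E*E))
            + E*((r/(k:ℝ))*((1-c*E)*(deriv 𝔅.toFun (A₄*r)*A₄)))
            + ((1-c*E)*(c*E)*(QQf n 𝔅 A₄ r))/(2*((n:ℝ)-1)) := by
        ring
      rw [hsplit2]
      have t1 : -(2*gam k*c*(1-𝔅.toFun (A₄*r))*(E*E)) ≤ 0 := by
        apply neg_nonpos.mpr
        apply mul_nonneg
        · exact mul_nonneg (mul_nonneg (by linarith : (0:ℝ) ≤ 2*gam k) hcpos.le) hBnn
        · exact mul_nonneg hEpos.le hEpos.le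
      have t2 : E*((r/(k:ℝ))*((1-c*E)*(deriv 𝔅.toFun (A₄*r)*A₄))) ≤ 0 := by
        apply mul_nonpos_of_nonneg_of_nonpos hEpos.le
        apply mul_nonpos_of_nonneg_of_nonpos (div_nonneg hr.le hkpos.le)
        apply mul_nonpos_of_nonneg_of_nonpos h1mcE
        exact le_of_lt (mul_neg_of_neg_of_pos hD1 hA₄)
      have t3 : ((1-c*E)*(c*E)*(QQf n 𝔅 A₄ r))/(2*((n:ℝ)-1)) ≤ 0 := by
        apply div_nonpos_iff.mpr
        right
        exact ⟨mul_nonpos_of_nonneg_of_nonpos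
          (mul_nonneg h1mcE (mul_nonneg hcpos.le hEpos.le)) hQnp, hN.le⟩
      linarith [t1, t2, t3]
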